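/- For a $d$-tuple $X$ of $n\times n$ matrices, the following are equivalent: (i) $\rho(X) < 1$; (ii) $\|X^{(k)}\| \to 0$ as $k\to\infty$, where $X^{(k)}$ is the row of all degree-$k$ monomials in $X_1,\dots,X_d$; (iii) $X$ is jointly similar to a strict row contraction. -/

import Mathlib

open scoped Matrix ComplexOrder Matrix.Norms.L2Operator

/-- The completely positive map `Ψ_X(T) = ∑ⱼ Xⱼ T Xⱼ*` associated to a `d`-tuple of matrices. -/
noncomputable def Psi {d : ℕ} {N : Type*} [Fintype N] [DecidableEq N]
    (X : Fin d → Matrix N N ℂ) (T : Matrix N N ℂ) : Matrix N N ℂ :=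
  ∑ j, X j * T * (X j)ᴴ

/-- The joint spectral radius `ρ(X) = lim_k ‖Ψ_X^k(I)‖^(1/(2k))`. -/
noncomputable def jsr {d : ℕ} {N : Type*} [Fintype N] [DecidableEq N]
    (X : Fin d → Matrix N N ℂ) : ℝ :=
  Filter.limsup (fun k : ℕ => ‖(Psi X)^[k] 1‖ ^ (1 / (2 * (k : ℝ)))) Filter.atTop

namespace StmtAux

open Matrix Filter

variable {d : ℕ} {N : Type*} [Fintype N] [DecidableEq N]

set_option linter.unusedSectionVars false

/-! ### Algebraic lemmas about `Psi` -/

lemma psi_add (X : Fin d → Matrix N N ℂ) (A B : Matrix N N ℂ) :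
    Psi X (A + B) = Psi X A + Psi X B := by
  simp [Psi, mul_add, add_mul, Finset.sum_add_distrib]

lemma psi_zero (X : Fin d → Matrix N N ℂ) : Psi X 0 = 0 := by
  simp [Psi]

lemma psi_sub (X : Fin d → Matrix N N ℂ) (A B : Matrix N N ℂ) :
    Psi X (A - B) = Psi X A - Psi X B := by
  simp [Psi, mul_sub, sub_mul, Finset.sum_sub_distrib]

lemma psi_smul (X : Fin d → Matrix N N ℂ) (c : ℝ) (A : Matrix N N ℂ) :
    Psi X (c • A) = c • Psi X A := by
  simp [Psi, Finset.smul_sum, mul_smul_comm, smul_mul_assoc]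

lemma psi_posSemidef (X : Fin d → Matrix N N ℂ) {T : Matrix N N ℂ} (hT : T.PosSemidef) :
    (Psi X T).PosSemidef := by
  unfold Psi
  exact Finset.sum_induction _ Matrix.PosSemidef (fun a b ha hb => ha.add hb)
    Matrix.PosSemidef.zero (fun j _ => hT.mul_mul_conjTranspose_same (X j))

lemma psi_mono (X : Fin d → Matrix N N ℂ) {A B : Matrix N N ℂ}
    (h : (B - A).PosSemidef) : (Psi X B - Psi X A).PosSemidef := by
  rw [← psi_sub]; exact psi_posSemidef X h

lemma iter_psd (X : Fin d → Matrix N N ℂ) (k : ℕ) {T : Matrix N N ℂ} (hT : T.PosSemidef) :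
    ((Psi X)^[k] T).PosSemidef := by
  induction k generalizing T with
  | zero => exact hT
  | succ k ih => rw [Function.iterate_succ_apply]; exact ih (psi_posSemidef X hT)

lemma iter_mono (X : Fin d → Matrix N N ℂ) (k : ℕ) {A B : Matrix N N ℂ}
    (h : (B - A).PosSemidef) : ((Psi X)^[k] B - (Psi X)^[k] A).PosSemidef := by
  induction k generalizing A B with
  | zero => exact h
  | succ k ih =>
      rw [Function.iterate_succ_apply, Function.iterate_succ_apply]
      exact ih (psi_mono X h)

lemma iter_smul (X : Fin d → Matrix N N ℂ) (k : ℕ) (c : ℝ) (A : Matrix N N ℂ) :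
    (Psi X)^[k] (c • A) = c • (Psi X)^[k] A := by
  induction k generalizing A with
  | zero => rfl
  | succ k ih => rw [Function.iterate_succ_apply, Function.iterate_succ_apply, psi_smul, ih]

lemma smul_psd {c : ℝ} (hc : 0 ≤ c) {A : Matrix N N ℂ} (hA : A.PosSemidef) :
    (c • A).PosSemidef := by
  refine Matrix.PosSemidef.of_dotProduct_mulVec_nonneg ?_ ?_
  · show (c • A)ᴴ = c • A
    rw [Matrix.conjTranspose_smul, star_trivial, hA.1.eq]
  · intro x
    rw [Matrix.smul_mulVec, dotProduct_smul]
    exact smul_nonneg (by exact_mod_cast hc) (hA.dotProduct_mulVec_nonneg x)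

/-! ### Norm and quadratic form lemmas -/

lemma quad_conj {A : Matrix N N ℂ} (hA : A.IsHermitian) (x : N → ℂ) :
    (starRingEnd ℂ) (star x ⬝ᵥ A *ᵥ x) = star x ⬝ᵥ A *ᵥ x := by
  have h1 : star (star x ⬝ᵥ A *ᵥ x) = star (A *ᵥ x) ⬝ᵥ x := (star_dotProduct _ _).symm
  rw [star_mulVec, ← dotProduct_mulVec, hA.eq] at h1
  exact h1

lemma quad_im {A : Matrix N N ℂ} (hA : A.IsHermitian) (x : N → ℂ) :
    (star x ⬝ᵥ A *ᵥ x).im = 0 :=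
  Complex.conj_eq_iff_im.mp (quad_conj hA x)

lemma inner_eq (x y : N → ℂ) :
    (inner ℂ ((WithLp.equiv 2 (N → ℂ)).symm x) ((WithLp.equiv 2 (N → ℂ)).symm y) : ℂ)
      = star x ⬝ᵥ y :=
  (EuclideanSpace.inner_toLp_toLp x y).trans (dotProduct_comm _ _)

lemma dot_self_eq_norm_sq (x : N → ℂ) :
    star x ⬝ᵥ x = (‖(WithLp.equiv 2 (N → ℂ)).symm x‖ : ℂ) ^ 2 := by
  rw [← inner_eq]
  exact inner_self_eq_norm_sq_to_K (𝕜 := ℂ) _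

lemma quad_abs_le (A : Matrix N N ℂ) (x : N → ℂ) :
    ‖star x ⬝ᵥ A *ᵥ x‖ ≤ ‖A‖ * ‖(WithLp.equiv 2 (N → ℂ)).symm x‖ ^ 2 := by
  have h1 : star x ⬝ᵥ A *ᵥ x =
      inner ℂ ((WithLp.equiv 2 (N → ℂ)).symm x) ((WithLp.equiv 2 (N → ℂ)).symm (A *ᵥ x)) :=
    (inner_eq x (A *ᵥ x)).symm
  rw [h1]
  calc ‖(inner ℂ ((WithLp.equiv 2 (N → ℂ)).symm x) ((WithLp.equiv 2 (N → ℂ)).symm (A *ᵥ x)) : ℂ)‖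
      ≤ ‖(WithLp.equiv 2 (N → ℂ)).symm x‖ * ‖(WithLp.equiv 2 (N → ℂ)).symm (A *ᵥ x)‖ :=
        norm_inner_le_norm _ _
    _ ≤ ‖(WithLp.equiv 2 (N → ℂ)).symm x‖ * (‖A‖ * ‖(WithLp.equiv 2 (N → ℂ)).symm x‖) := by
        apply mul_le_mul_of_nonneg_left _ (norm_nonneg _)
        have := A.l2_opNorm_mulVec ((WithLp.equiv 2 (N → ℂ)).symm x); exact this
    _ = ‖A‖ * ‖(WithLp.equiv 2 (N → ℂ)).symm x‖ ^ 2 := by ring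

/-- N1: a PSD matrix is dominated by its norm times the identity. -/
lemma psd_le_norm_smul_one {A : Matrix N N ℂ} (hA : A.PosSemidef) :
    ((‖A‖ : ℝ) • (1 : Matrix N N ℂ) - A).PosSemidef := by
  have hherm : ((‖A‖ : ℝ) • (1 : Matrix N N ℂ) - A).IsHermitian := by
    show _ = _
    rw [conjTranspose_sub, conjTranspose_smul, star_trivial, conjTranspose_one, hA.1.eq]
  refine Matrix.PosSemidef.of_dotProduct_mulVec_nonneg hherm fun x => ?_
  rw [Complex.le_def]
  constructor
  · simp only [Complex.zero_re, sub_mulVec, dotProduct_sub, Complex.sub_re,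
      Matrix.smul_mulVec, one_mulVec, dotProduct_smul]
    have h2 := dot_self_eq_norm_sq x
    have h3 := quad_abs_le A x
    have h4 : (star x ⬝ᵥ A *ᵥ x).re ≤ ‖star x ⬝ᵥ A *ᵥ x‖ := Complex.re_le_norm _
    rw [sub_nonneg]
    calc (star x ⬝ᵥ A *ᵥ x).re ≤ ‖A‖ * ‖(WithLp.equiv 2 (N → ℂ)).symm x‖ ^ 2 := h4.trans h3
      _ = ((‖A‖ : ℝ) • (star x ⬝ᵥ x)).re := by
          rw [h2, Complex.real_smul, ← Complex.ofReal_pow, ← Complex.ofReal_mul,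
            Complex.ofReal_re]
  · rw [quad_im hherm x, Complex.zero_im]

open scoped MatrixOrder in
lemma exists_psd_sqrt {A : Matrix N N ℂ} (hA : A.PosSemidef) :
    ∃ B : Matrix N N ℂ, B.PosSemidef ∧ B * B = A :=
  ⟨CFC.sqrt A, (CFC.sqrt_nonneg A).posSemidef, CFC.sqrt_mul_sqrt_self A hA.nonneg⟩

/-- N2: if `c • 1 - A` is PSD for a PSD `A`, then `‖A‖ ≤ c`. -/
lemma norm_le_of_le_smul_one {A : Matrix N N ℂ} (hA : A.PosSemidef) {c : ℝ} (hc : 0 ≤ c)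
    (h : ((c : ℝ) • (1 : Matrix N N ℂ) - A).PosSemidef) : ‖A‖ ≤ c := by
  obtain ⟨B, hB, hBB'⟩ := exists_psd_sqrt hA
  have hBB : Bᴴ * B = A := by rw [hB.1.eq]; exact hBB'
  have h1 : ‖A‖ = ‖B‖ * ‖B‖ := by rw [← hBB]; exact B.l2_opNorm_conjTranspose_mul_self
  have hquad : ∀ x : N → ℂ, (star x ⬝ᵥ A *ᵥ x).re ≤ c * ‖(WithLp.equiv 2 (N → ℂ)).symm x‖ ^ 2 := by
    intro x
    have h0 := h.dotProduct_mulVec_nonneg x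
    rw [Complex.le_def] at h0
    have h0re := h0.1
    simp only [Complex.zero_re, sub_mulVec, dotProduct_sub, Complex.sub_re,
      Matrix.smul_mulVec, one_mulVec, dotProduct_smul] at h0re
    rw [sub_nonneg] at h0re
    calc (star x ⬝ᵥ A *ᵥ x).re ≤ ((c : ℝ) • (star x ⬝ᵥ x)).re := h0re
      _ = c * ‖(WithLp.equiv 2 (N → ℂ)).symm x‖ ^ 2 := by
          rw [dot_self_eq_norm_sq, Complex.real_smul, ← Complex.ofReal_pow,
            ← Complex.ofReal_mul, Complex.ofReal_re]
  have hBle : ‖B‖ ≤ Real.sqrt c := by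
    rw [l2_opNorm_def]
    refine ContinuousLinearMap.opNorm_le_bound _ (Real.sqrt_nonneg c) fun x => ?_
    set y := WithLp.equiv 2 (N → ℂ) x with hy
    have hxy : x = (WithLp.equiv 2 (N → ℂ)).symm y := rfl
    have happ : (LinearEquiv.trans toEuclideanLin LinearMap.toContinuousLinearMap B) x
        = (WithLp.equiv 2 (N → ℂ)).symm (B *ᵥ y) := by
      rw [hxy]
      rfl
    rw [happ]
    have hsq : ‖(WithLp.equiv 2 (N → ℂ)).symm (B *ᵥ y)‖ ^ 2 = (star y ⬝ᵥ A *ᵥ y).re := by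
      rw [← hBB]
      have : star y ⬝ᵥ (Bᴴ * B) *ᵥ y = star (B *ᵥ y) ⬝ᵥ (B *ᵥ y) := by
        rw [star_mulVec, ← Matrix.mulVec_mulVec, dotProduct_mulVec]
      rw [this, dot_self_eq_norm_sq, ← Complex.ofReal_pow, Complex.ofReal_re]
    have hnn : (0:ℝ) ≤ ‖(WithLp.equiv 2 (N → ℂ)).symm (B *ᵥ y)‖ := norm_nonneg _
    have hb2 : ‖(WithLp.equiv 2 (N → ℂ)).symm (B *ᵥ y)‖ ^ 2 ≤ (Real.sqrt c * ‖x‖) ^ 2 := by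
      rw [hsq, mul_pow, Real.sq_sqrt hc]
      have := hquad y
      rwa [← hxy] at this
    have h5 := Real.sqrt_le_sqrt hb2
    rwa [Real.sqrt_sq hnn, Real.sqrt_sq (by positivity)] at h5
  rw [h1]
  calc ‖B‖ * ‖B‖ ≤ Real.sqrt c * Real.sqrt c :=
        mul_le_mul hBle hBle (norm_nonneg _) (Real.sqrt_nonneg _)
    _ = c := Real.mul_self_sqrt hc

/-- If `A` is PSD with norm `< 1` then `1 - A` is positive definite. -/
lemma posdef_one_sub_of_norm_lt {A : Matrix N N ℂ} (hA : A.PosSemidef) (h : ‖A‖ < 1) :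
    ((1 : Matrix N N ℂ) - A).PosDef := by
  have hherm : ((1 : Matrix N N ℂ) - A).IsHermitian := by
    show _ = _
    rw [conjTranspose_sub, conjTranspose_one, hA.1.eq]
  refine Matrix.PosDef.of_dotProduct_mulVec_pos hherm fun x hx => ?_
  rw [Complex.lt_def]
  refine ⟨?_, (quad_im hherm x).symm ▸ Complex.zero_im⟩
  simp only [Complex.zero_re, sub_mulVec, dotProduct_sub, Complex.sub_re, one_mulVec]
  rw [dot_self_eq_norm_sq, ← Complex.ofReal_pow, Complex.ofReal_re, sub_pos]
  have hx' : (WithLp.equiv 2 (N → ℂ)).symm x ≠ 0 := by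
    intro hc; apply hx
    have := congrArg (WithLp.equiv 2 (N → ℂ)) hc
    simpa using this
  have hxpos : 0 < ‖(WithLp.equiv 2 (N → ℂ)).symm x‖ ^ 2 := pow_pos (norm_pos_iff.mpr hx') 2
  calc (star x ⬝ᵥ A *ᵥ x).re ≤ ‖star x ⬝ᵥ A *ᵥ x‖ := Complex.re_le_norm _
    _ ≤ ‖A‖ * ‖(WithLp.equiv 2 (N → ℂ)).symm x‖ ^ 2 := quad_abs_le A x
    _ < 1 * ‖(WithLp.equiv 2 (N → ℂ)).symm x‖ ^ 2 := by
        exact mul_lt_mul_of_pos_right h hxpos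
    _ = ‖(WithLp.equiv 2 (N → ℂ)).symm x‖ ^ 2 := one_mul _

/-- Conjugation by an invertible matrix preserves positive definiteness. -/
lemma posdef_conj {M : Matrix N N ℂ} (hM : M.PosDef) {B : Matrix N N ℂ} (hB : IsUnit B) :
    (B * M * Bᴴ).PosDef := by
  have hherm : (B * M * Bᴴ).IsHermitian := by
    show _ = _
    simp only [conjTranspose_mul, conjTranspose_conjTranspose, hM.1.eq, mul_assoc]
  refine Matrix.PosDef.of_dotProduct_mulVec_pos hherm fun x hx => ?_
  have hx' : Bᴴ *ᵥ x ≠ 0 := by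
    have hinj : Function.Injective (Bᴴ).mulVec := by
      rw [Matrix.mulVec_injective_iff_isUnit, Matrix.isUnit_iff_isUnit_det,
        Matrix.det_conjTranspose]
      exact ((Matrix.isUnit_iff_isUnit_det _).mp hB).star
    intro hc
    exact hx (by simpa using hinj (hc.trans (Matrix.mulVec_zero _).symm))
  have := hM.dotProduct_mulVec_pos hx'
  simpa only [star_mulVec, dotProduct_mulVec, vecMul_vecMul, conjTranspose_conjTranspose,
    Matrix.mul_assoc] using this

lemma smul_one_sub_diag (c : ℝ) (f : N → ℝ) :
    c • (1 : Matrix N N ℂ) - diagonal (fun i => (f i : ℂ))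
      = diagonal (fun i => ((c - f i : ℝ) : ℂ)) := by
  ext i j
  by_cases h : i = j <;>
    simp [h, Matrix.one_apply, diagonal_apply, Matrix.sub_apply, Matrix.smul_apply,
      Complex.real_smul]

/-- If `A` is PSD and `1 - A` is positive definite, then `A ⪯ c•1` for some `0 ≤ c < 1`. -/
lemma exists_c {A : Matrix N N ℂ} (hA : A.PosSemidef) (h1 : ((1 : Matrix N N ℂ) - A).PosDef) :
    ∃ c : ℝ, 0 ≤ c ∧ c < 1 ∧ (c • (1 : Matrix N N ℂ) - A).PosSemidef := by
  cases isEmpty_or_nonempty N with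
  | inl hempty =>
      refine ⟨0, le_refl _, zero_lt_one, ?_⟩
      have : (0 : ℝ) • (1 : Matrix N N ℂ) - A = 0 := Subsingleton.elim _ _
      rw [this]; exact Matrix.PosSemidef.zero
  | inr hne =>
      set lam := hA.1.eigenvalues with hlam
      have hlt : ∀ i, lam i < 1 := by
        intro i
        set v := hA.1.eigenvectorBasis i with hv
        have hv1 : ‖v‖ = 1 := hA.1.eigenvectorBasis.orthonormal.1 i
        have hvne : ⇑v ≠ 0 := by
          intro hc
          have hv0 : v = 0 := by simpa using congrArg (WithLp.toLp 2) hc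
          rw [hv0] at hv1; simp at hv1
        have hq := h1.dotProduct_mulVec_pos hvne
        have hAv : A *ᵥ ⇑v = (lam i : ℂ) • ⇑v := by
          rw [hA.1.mulVec_eigenvectorBasis]
          ext j
          simp [Complex.real_smul, hlam, hv]
        have hdot : star ⇑v ⬝ᵥ ⇑v = 1 := by
          rw [dot_self_eq_norm_sq]
          have hvv : (WithLp.equiv 2 (N → ℂ)).symm ⇑v = v := rfl
          rw [hvv, hv1]
          norm_num
        rw [sub_mulVec, dotProduct_sub, one_mulVec, hAv, dotProduct_smul, hdot] at hq
        rw [Complex.lt_def] at hq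
        have := hq.1
        simp only [Complex.zero_re, smul_eq_mul, mul_one, Complex.sub_re, Complex.one_re,
          Complex.ofReal_re] at this
        linarith
      have h0 : ∀ i, 0 ≤ lam i := fun i => hA.eigenvalues_nonneg i
      set c := Finset.univ.sup' (Finset.univ_nonempty) lam with hc
      refine ⟨c, le_trans (h0 (Classical.arbitrary N))
        (Finset.le_sup' lam (Finset.mem_univ _)), ?_, ?_⟩
      · rw [hc, Finset.sup'_lt_iff]
        exact fun i _ => hlt i
      · have hspec := hA.1.spectral_theorem
        set V := (hA.1.eigenvectorUnitary : Matrix N N ℂ) with hV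
        have hVV : V * star V = 1 := (Matrix.mem_unitaryGroup_iff).mp hA.1.eigenvectorUnitary.2
        have hkey : c • (1 : Matrix N N ℂ) - A
            = V * (diagonal fun i => ((c - lam i : ℝ) : ℂ)) * Vᴴ := by
          rw [← smul_one_sub_diag]
          rw [mul_sub, sub_mul]
          congr 1
          rw [Matrix.mul_smul, Matrix.smul_mul, mul_one, ← Matrix.star_eq_conjTranspose, hVV]
        rw [hkey]
        apply Matrix.PosSemidef.mul_mul_conjTranspose_same
        apply Matrix.PosSemidef.diagonal
        intro i
        show (0 : ℂ) ≤ ((c - lam i : ℝ) : ℂ)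
        rw [Complex.zero_le_real, sub_nonneg]
        exact Finset.le_sup' lam (Finset.mem_univ i)

/-! ### Iterates dominated by geometric sequences -/

lemma iter_le_pow (X : Fin d → Matrix N N ℂ) {c : ℝ} (hc : 0 ≤ c)
    (h : (c • (1 : Matrix N N ℂ) - Psi X 1).PosSemidef) (k : ℕ) :
    ((c ^ k) • (1 : Matrix N N ℂ) - (Psi X)^[k] 1).PosSemidef := by
  induction k with
  | zero => simp only [pow_zero, one_smul, Function.iterate_zero_apply, sub_self]
            exact Matrix.PosSemidef.zero
  | succ k ih =>
      have hA1 : ((c ^ (k+1)) • (1 : Matrix N N ℂ) - c • (Psi X)^[k] 1).PosSemidef := by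
        have := smul_psd hc ih
        rwa [smul_sub, smul_smul, ← pow_succ'] at this
      have hA2 : (c • (Psi X)^[k] 1 - (Psi X)^[k+1] 1).PosSemidef := by
        have := iter_mono X k h
        rwa [iter_smul, ← Function.iterate_succ_apply] at this
      have := hA1.add hA2
      rwa [sub_add_sub_cancel] at this

lemma norm_iter_le (X : Fin d → Matrix N N ℂ) {c : ℝ} (hc : 0 ≤ c)
    (h : (c • (1 : Matrix N N ℂ) - Psi X 1).PosSemidef) (k : ℕ) :
    ‖(Psi X)^[k] 1‖ ≤ c ^ k :=
  norm_le_of_le_smul_one (iter_psd X k Matrix.PosSemidef.one) (pow_nonneg hc k)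
    (iter_le_pow X hc h k)


/-! ### The implications -/


lemma imp12 (X : Fin d → Matrix N N ℂ) (h : jsr X < 1) :
    Tendsto (fun k => Real.sqrt ‖(Psi X)^[k] 1‖) atTop (nhds 0) := by
  set u : ℕ → ℝ := fun k => ‖(Psi X)^[k] 1‖ ^ (1 / (2 * (k : ℝ))) with hu
  set c0 := ‖Psi X 1‖ with hc0
  have hc0n : (0:ℝ) ≤ c0 := norm_nonneg _
  have hpsd1 : (c0 • (1 : Matrix N N ℂ) - Psi X 1).PosSemidef :=
    psd_le_norm_smul_one (psi_posSemidef X Matrix.PosSemidef.one)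
  have hak : ∀ k, ‖(Psi X)^[k] 1‖ ≤ c0 ^ k := norm_iter_le X hc0n hpsd1
  have hbound : ∀ k, u k ≤ max 1 (Real.sqrt c0) := by
    intro k
    rcases Nat.eq_zero_or_pos k with hk | hk
    · subst hk
      simp only [hu, Nat.cast_zero, mul_zero, div_zero, Real.rpow_zero]
      exact le_max_left _ _
    · have hkne : (k:ℝ) ≠ 0 := Nat.cast_ne_zero.mpr hk.ne'
      have h1 : u k ≤ (c0 ^ k) ^ (1 / (2 * (k:ℝ))) :=
        Real.rpow_le_rpow (norm_nonneg _) (hak k) (by positivity)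
      have h2 : ((c0 ^ k : ℝ)) ^ (1 / (2 * (k:ℝ))) = Real.sqrt c0 := by
        rw [← Real.rpow_natCast c0 k, ← Real.rpow_mul hc0n,
          show (k:ℝ) * (1 / (2 * (k:ℝ))) = 1/2 by field_simp,
          ← Real.sqrt_eq_rpow]
      exact le_trans (h2 ▸ h1) (le_max_right _ _)
  obtain ⟨r, hjr, hr1⟩ : ∃ r, jsr X < r ∧ r < 1 := ⟨(jsr X + 1)/2, by linarith, by linarith⟩
  have hjsr : jsr X = limsup u atTop := rfl
  have hbd : IsBoundedUnder (· ≤ ·) atTop u :=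
    isBoundedUnder_of ⟨max 1 (Real.sqrt c0), hbound⟩
  have hev : ∀ᶠ k in atTop, u k < r := eventually_lt_of_limsup_lt (hjsr ▸ hjr) hbd
  set r' := max r 0 with hr'
  have hr'0 : (0:ℝ) ≤ r' := le_max_right _ _
  have hr'1 : r' < 1 := max_lt hr1 one_pos
  have hg : Tendsto (fun k : ℕ => r' ^ k) atTop (nhds 0) :=
    tendsto_pow_atTop_nhds_zero_of_lt_one hr'0 hr'1
  apply tendsto_of_tendsto_of_tendsto_of_le_of_le' tendsto_const_nhds hg
  · exact Eventually.of_forall fun k => Real.sqrt_nonneg _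
  · filter_upwards [hev, eventually_ge_atTop 1] with k hk hk1
    have hkne : (k:ℝ) ≠ 0 := Nat.cast_ne_zero.mpr (by omega)
    have hub : u k ≤ r' := le_trans hk.le (le_max_left _ _)
    have hun : (0:ℝ) ≤ u k := Real.rpow_nonneg (norm_nonneg _) _
    have h3 : u k ^ (2 * k) = ‖(Psi X)^[k] 1‖ := by
      rw [hu]
      rw [← Real.rpow_natCast (‖(Psi X)^[k] 1‖ ^ (1 / (2 * (k:ℝ)))) (2*k),
          ← Real.rpow_mul (norm_nonneg _),
          show (1 / (2 * (k:ℝ))) * ((2*k : ℕ):ℝ) = 1 by push_cast; field_simp,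
          Real.rpow_one]
    have hae : ‖(Psi X)^[k] 1‖ ≤ (r' ^ k) ^ 2 := by
      rw [← h3]
      calc u k ^ (2*k) ≤ r' ^ (2*k) := pow_le_pow_left₀ hun hub _
        _ = (r' ^ k) ^ 2 := by rw [← pow_mul, mul_comm]
    have := Real.sqrt_le_sqrt hae
    rwa [Real.sqrt_sq (pow_nonneg hr'0 k)] at this

lemma imp23 (X : Fin d → Matrix N N ℂ)
    (h : Tendsto (fun k => Real.sqrt ‖(Psi X)^[k] 1‖) atTop (nhds 0)) :
    ∃ S : Matrix N N ℂ, IsUnit S ∧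
      (1 - ∑ j, (S⁻¹ * X j * S) * (S⁻¹ * X j * S)ᴴ).PosDef := by
  have hev : ∀ᶠ k in atTop, Real.sqrt ‖(Psi X)^[k] 1‖ < 1 :=
    h.eventually_lt_const one_pos
  obtain ⟨m, hm1, hmlt⟩ := ((eventually_ge_atTop 1).and hev).exists
  have ham : ‖(Psi X)^[m] 1‖ < 1 := by
    have h1 := Real.sq_sqrt (norm_nonneg ((Psi X)^[m] 1))
    nlinarith [Real.sqrt_nonneg ‖(Psi X)^[m] 1‖, hmlt]
  have hm1' : ((1 : Matrix N N ℂ) - (Psi X)^[m] 1).PosDef :=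
    posdef_one_sub_of_norm_lt (iter_psd X m Matrix.PosSemidef.one) ham
  set P := ∑ j ∈ Finset.range m, (Psi X)^[j] 1 with hP
  have psi_sum : ∀ (s : Finset ℕ) (f : ℕ → Matrix N N ℂ),
      Psi X (∑ j ∈ s, f j) = ∑ j ∈ s, Psi X (f j) := by
    intro s f
    induction s using Finset.induction with
    | empty => simpa using psi_zero X
    | insert _ _ hj ih => rw [Finset.sum_insert hj, Finset.sum_insert hj, psi_add, ih]
  have hPsiP : Psi X P = ∑ j ∈ Finset.range m, (Psi X)^[j+1] 1 := by
    rw [hP, psi_sum]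
    exact Finset.sum_congr rfl fun j _ => (Function.iterate_succ_apply' (Psi X) j 1).symm
  have hkey : P - Psi X P = 1 - (Psi X)^[m] 1 := by
    have e1 : ∑ j ∈ Finset.range (m+1), (Psi X)^[j] 1
        = ∑ j ∈ Finset.range m, (Psi X)^[j+1] 1 + (Psi X)^[0] 1 :=
      Finset.sum_range_succ' _ m
    have e2 : ∑ j ∈ Finset.range (m+1), (Psi X)^[j] 1 = P + (Psi X)^[m] 1 :=
      Finset.sum_range_succ _ m
    have e3 : ∑ j ∈ Finset.range m, (Psi X)^[j+1] 1 = P + (Psi X)^[m] 1 - 1 := by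
      rw [← e2, e1, Function.iterate_zero_apply]
      abel
    rw [hPsiP, e3]
    abel
  have hPpd : P.PosDef := by
    obtain ⟨m', rfl⟩ : ∃ m', m = m' + 1 := ⟨m - 1, by omega⟩
    have hpsd : (∑ j ∈ Finset.range m', (Psi X)^[j+1] 1).PosSemidef :=
      Finset.sum_induction _ Matrix.PosSemidef (fun a b ha hb => ha.add hb)
        Matrix.PosSemidef.zero (fun j _ => iter_psd X (j+1) Matrix.PosSemidef.one)
    have hPe : P = ∑ j ∈ Finset.range m', (Psi X)^[j+1] 1 + 1 := by
      rw [hP, Finset.sum_range_succ' _ m', Function.iterate_zero_apply]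
    rw [hPe]
    exact Matrix.PosDef.posSemidef_add hpsd Matrix.PosDef.one
  obtain ⟨S, hSpsd, hSS⟩ := exists_psd_sqrt hPpd.posSemidef
  have hSh : Sᴴ = S := hSpsd.1
  have hdet : IsUnit S.det := by
    rw [isUnit_iff_ne_zero]
    intro h0
    have hP0 : P.det = 0 := by rw [← hSS, Matrix.det_mul, h0, mul_zero]
    exact hPpd.det_pos.ne' hP0
  have hSu : IsUnit S := (Matrix.isUnit_iff_isUnit_det S).mpr hdet
  refine ⟨S, hSu, ?_⟩
  have hinv1 : S⁻¹ * S = 1 := Matrix.nonsing_inv_mul S hdet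
  have hinv2 : S * S⁻¹ = 1 := Matrix.mul_nonsing_inv S hdet
  have hinvH : (S⁻¹)ᴴ = S⁻¹ := by rw [Matrix.conjTranspose_nonsing_inv, hSh]
  have hterm : ∀ j, (S⁻¹ * X j * S) * (S⁻¹ * X j * S)ᴴ
      = S⁻¹ * (X j * P * (X j)ᴴ) * (S⁻¹)ᴴ := by
    intro j
    rw [conjTranspose_mul, conjTranspose_mul, hSh, ← hSS]
    simp only [Matrix.mul_assoc]
  have hsum : ∑ j, (S⁻¹ * X j * S) * (S⁻¹ * X j * S)ᴴ = S⁻¹ * Psi X P * (S⁻¹)ᴴ := by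
    rw [Finset.sum_congr rfl fun j _ => hterm j]
    unfold Psi
    rw [Finset.mul_sum, Finset.sum_mul]
  have hone : S⁻¹ * P * (S⁻¹)ᴴ = 1 := by
    rw [hinvH, ← hSS]
    simp only [Matrix.mul_assoc]
    rw [hinv2, Matrix.mul_one, hinv1]
  have hfin : (1 : Matrix N N ℂ) - ∑ j, (S⁻¹ * X j * S) * (S⁻¹ * X j * S)ᴴ
      = S⁻¹ * ((1 : Matrix N N ℂ) - (Psi X)^[m] 1) * (S⁻¹)ᴴ := by
    rw [hsum, ← hkey, Matrix.mul_sub, Matrix.sub_mul, hone]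
  rw [hfin]
  exact posdef_conj hm1' (Matrix.isUnit_nonsing_inv_iff.mpr hSu)

lemma imp31 (X : Fin d → Matrix N N ℂ)
    (h : ∃ S : Matrix N N ℂ, IsUnit S ∧
      (1 - ∑ j, (S⁻¹ * X j * S) * (S⁻¹ * X j * S)ᴴ).PosDef) : jsr X < 1 := by
  obtain ⟨S, hSu, hpd⟩ := h
  have hdet := (Matrix.isUnit_iff_isUnit_det S).mp hSu
  set Y : Fin d → Matrix N N ℂ := fun j => S⁻¹ * X j * S with hY
  have hpd' : ((1 : Matrix N N ℂ) - Psi Y 1).PosDef := by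
    have hYe : Psi Y 1 = ∑ j, (S⁻¹ * X j * S) * (S⁻¹ * X j * S)ᴴ := by
      unfold Psi
      exact Finset.sum_congr rfl fun j _ => by rw [hY, mul_one]
    rw [hYe]; exact hpd
  obtain ⟨c, hc0, hc1, hcle⟩ := exists_c (psi_posSemidef Y Matrix.PosSemidef.one) hpd'
  have hinv1 : S⁻¹ * S = 1 := Matrix.nonsing_inv_mul S hdet
  have hinv2 : S * S⁻¹ = 1 := Matrix.mul_nonsing_inv S hdet
  have hinvH1 : (S⁻¹)ᴴ * Sᴴ = 1 := by rw [← conjTranspose_mul, hinv2, conjTranspose_one]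
  have hinvH2 : Sᴴ * (S⁻¹)ᴴ = 1 := by rw [← conjTranspose_mul, hinv1, conjTranspose_one]
  have l1 : ∀ M : Matrix N N ℂ, S * (S⁻¹ * M) = M := fun M => by
    rw [← Matrix.mul_assoc, hinv2, one_mul]
  have l2 : ∀ M : Matrix N N ℂ, S⁻¹ * (S * M) = M := fun M => by
    rw [← Matrix.mul_assoc, hinv1, one_mul]
  have l3 : ∀ M : Matrix N N ℂ, (S⁻¹)ᴴ * (Sᴴ * M) = M := fun M => by
    rw [← Matrix.mul_assoc, hinvH1, one_mul]
  have l4 : ∀ M : Matrix N N ℂ, Sᴴ * ((S⁻¹)ᴴ * M) = M := fun M => by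
    rw [← Matrix.mul_assoc, hinvH2, one_mul]
  have hstep : ∀ T, Psi X T = S * Psi Y (S⁻¹ * T * (S⁻¹)ᴴ) * Sᴴ := by
    intro T
    unfold Psi
    rw [Finset.mul_sum, Finset.sum_mul]
    refine Finset.sum_congr rfl fun j _ => ?_
    rw [hY]
    simp only [conjTranspose_mul, Matrix.mul_assoc, l1, l2, l3, l4,
      hinv1, hinv2, hinvH1, hinvH2, mul_one, one_mul]
  have hiter : ∀ k T, (Psi X)^[k] T = S * (Psi Y)^[k] (S⁻¹ * T * (S⁻¹)ᴴ) * Sᴴ := by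
    intro k
    induction k with
    | zero =>
        intro T
        simp only [Function.iterate_zero_apply]
        simp only [Matrix.mul_assoc, l1, l2, l3, l4, hinv1, hinv2, hinvH1, hinvH2,
          mul_one, one_mul]
    | succ k ih =>
        intro T
        rw [Function.iterate_succ_apply, ih (Psi X T), hstep T]
        have hin : S⁻¹ * (S * Psi Y (S⁻¹ * T * (S⁻¹)ᴴ) * Sᴴ) * (S⁻¹)ᴴ
            = Psi Y (S⁻¹ * T * (S⁻¹)ᴴ) := by
          simp only [Matrix.mul_assoc, l2, hinvH2, mul_one]
        rw [hin, ← Function.iterate_succ_apply]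
  set Q := S⁻¹ * (S⁻¹)ᴴ with hQ
  have hQpsd : Q.PosSemidef := Matrix.posSemidef_self_mul_conjTranspose S⁻¹
  have hYiter : ∀ k, ‖(Psi Y)^[k] Q‖ ≤ ‖Q‖ * c ^ k := by
    intro k
    have h1 : ((‖Q‖ : ℝ) • (1 : Matrix N N ℂ) - Q).PosSemidef := psd_le_norm_smul_one hQpsd
    have h2 := iter_mono Y k h1
    rw [iter_smul] at h2
    have h3 := smul_psd (norm_nonneg Q) (iter_le_pow Y hc0 hcle k)
    rw [smul_sub, smul_smul] at h3
    have h4 := h3.add h2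
    rw [sub_add_sub_cancel] at h4
    exact norm_le_of_le_smul_one (iter_psd Y k hQpsd)
      (mul_nonneg (norm_nonneg _) (pow_nonneg hc0 k)) h4
  have habound : ∀ k, ‖(Psi X)^[k] 1‖ ≤ (‖S‖ * ‖Sᴴ‖ * ‖Q‖) * c ^ k := by
    intro k
    have h0 : (Psi X)^[k] 1 = S * (Psi Y)^[k] Q * Sᴴ := by
      rw [hiter k 1, Matrix.mul_one]
    rw [h0]
    calc ‖S * (Psi Y)^[k] Q * Sᴴ‖ ≤ ‖S * (Psi Y)^[k] Q‖ * ‖Sᴴ‖ := Matrix.l2_opNorm_mul _ _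
      _ ≤ ‖S‖ * ‖(Psi Y)^[k] Q‖ * ‖Sᴴ‖ :=
          mul_le_mul_of_nonneg_right (Matrix.l2_opNorm_mul _ _) (norm_nonneg _)
      _ ≤ ‖S‖ * (‖Q‖ * c ^ k) * ‖Sᴴ‖ := by
          have := hYiter k
          have h5 : ‖S‖ * ‖(Psi Y)^[k] Q‖ ≤ ‖S‖ * (‖Q‖ * c ^ k) :=
            mul_le_mul_of_nonneg_left this (norm_nonneg _)
          exact mul_le_mul_of_nonneg_right h5 (norm_nonneg _)
      _ = (‖S‖ * ‖Sᴴ‖ * ‖Q‖) * c ^ k := by ring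
  set r := Real.sqrt ((c+1)/2) with hr
  have hr2 : r^2 = (c+1)/2 := Real.sq_sqrt (by linarith)
  have hr0 : 0 < r := Real.sqrt_pos.mpr (by linarith)
  have hr1 : r < 1 := by nlinarith
  have hcr : c < r^2 := by rw [hr2]; linarith
  have ht : Tendsto (fun k : ℕ => (‖S‖ * ‖Sᴴ‖ * ‖Q‖) * (c / r^2)^k) atTop (nhds 0) := by
    have h6 := tendsto_pow_atTop_nhds_zero_of_lt_one
      (div_nonneg hc0 (by positivity)) ((div_lt_one (by positivity)).mpr hcr)
    simpa using h6.const_mul (‖S‖ * ‖Sᴴ‖ * ‖Q‖)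
  have hev : ∀ᶠ k in atTop,
      (fun k : ℕ => ‖(Psi X)^[k] 1‖ ^ (1 / (2 * (k:ℝ)))) k ≤ r := by
    filter_upwards [ht.eventually_le_const one_pos, eventually_ge_atTop 1] with k hk hk1
    have hkne : (k:ℝ) ≠ 0 := Nat.cast_ne_zero.mpr (by omega)
    have h1 : ‖(Psi X)^[k] 1‖ ≤ r ^ (2*k) := by
      have hrne : (r:ℝ) ≠ 0 := ne_of_gt hr0
      have e : ((‖S‖ * ‖Sᴴ‖ * ‖Q‖) * (c/r^2)^k) * ((r^2)^k) = (‖S‖ * ‖Sᴴ‖ * ‖Q‖) * c^k := by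
        rw [mul_assoc (‖S‖ * ‖Sᴴ‖ * ‖Q‖) ((c/r^2)^k) ((r^2)^k), ← mul_pow,
          div_mul_cancel₀ _ (pow_ne_zero 2 hrne)]
      calc ‖(Psi X)^[k] 1‖ ≤ (‖S‖ * ‖Sᴴ‖ * ‖Q‖) * c^k := habound k
        _ = ((‖S‖ * ‖Sᴴ‖ * ‖Q‖) * (c/r^2)^k) * ((r^2)^k) := e.symm
        _ ≤ 1 * ((r^2)^k) := mul_le_mul_of_nonneg_right hk (by positivity)
        _ = r ^ (2*k) := by rw [one_mul, ← pow_mul]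
    have h2 : ‖(Psi X)^[k] 1‖ ^ (1 / (2 * (k:ℝ))) ≤ (r ^ (2*k)) ^ (1 / (2 * (k:ℝ))) :=
      Real.rpow_le_rpow (norm_nonneg _) h1 (by positivity)
    have h3 : ((r ^ (2*k) : ℝ)) ^ (1 / (2 * (k:ℝ))) = r := by
      rw [← Real.rpow_natCast r (2*k), ← Real.rpow_mul hr0.le,
        show ((2*k : ℕ):ℝ) * (1 / (2 * (k:ℝ))) = 1 by push_cast; field_simp,
        Real.rpow_one]
    rw [h3] at h2
    exact h2
  have hbd : IsCoboundedUnder (· ≤ ·) atTop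
      (fun k : ℕ => ‖(Psi X)^[k] 1‖ ^ (1 / (2 * (k:ℝ)))) :=
    isCoboundedUnder_le_of_le atTop (fun k => Real.rpow_nonneg (norm_nonneg _) _)
  have hle : jsr X ≤ r := limsup_le_of_le hbd hev
  exact lt_of_le_of_lt hle hr1


end StmtAux

/-- The following are equivalent: `ρ(X) < 1`; the norms of the rows of degree-`k` monomials
`‖X^(k)‖ = ‖Ψ_X^k(I)‖^(1/2)` tend to `0`; and `X` is jointly similar to a strict row
contraction. -/
theorem stmt_5 {d n : ℕ} (X : Fin d → Matrix (Fin n) (Fin n) ℂ) :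
    List.TFAE [jsr X < 1,
      Filter.Tendsto (fun k => Real.sqrt ‖(Psi X)^[k] 1‖) Filter.atTop (nhds 0),
      ∃ S : Matrix (Fin n) (Fin n) ℂ, IsUnit S ∧
        (1 - ∑ j, (S⁻¹ * X j * S) * (S⁻¹ * X j * S)ᴴ).PosDef] := by
  tfae_have 1 → 2 := StmtAux.imp12 X
  tfae_have 2 → 3 := StmtAux.imp23 X
  tfae_have 3 → 1 := StmtAux.imp31 X
  tfae_finish
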